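/- Suppose parts (a)–(d) of the Basic Assumption hold and the functions f, f^ν : ℝ^n × ℝ^m → (−∞,∞] satisfy liminf_ν f^ν(x^ν, y^ν) ≥ f(x,y) whenever x^ν ∈ X → x and y^ν ∈ Y → y. If τ^ν ∈ [0,∞) → β and σ^ν, θ^ν → ∞, then liminf_{ν→∞} φ^ν(x^ν, y^ν, u^ν, α^ν, λ^ν) ≥ φ_β(x, y, u, α, λ) whenever (x^ν, y^ν, u^ν, α^ν, λ^ν) → (x, y, u, α, λ). -/

import Mathlib

open Filter Topology Metric Set

attribute [local instance] Classical.propDecidable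

noncomputable section

/-- `ℝ^n` with the Euclidean norm. -/
abbrev Rn (n : ℕ) : Type := EuclideanSpace ℝ (Fin n)

variable {n m : ℕ} {Q : Type*} [NormedAddCommGroup Q]

/-- `(x, y)` is feasible in the bilevel problem (P): `x ∈ X` and
`y ∈ τ-argmin_{z ∈ Y} { g(x,z) | H(x,z) ∈ D }`. -/
def PFeas (X : Set (Rn n)) (Y : Set (Rn m)) (D : Set Q)
    (g : Rn n × Rn m → ℝ) (H : Rn n × Rn m → Q) (τ : ℝ)
    (x : Rn n) (y : Rn m) : Prop :=
  x ∈ X ∧ y ∈ Y ∧ H (x, y) ∈ D ∧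
    ∀ z ∈ Y, H (x, z) ∈ D → g (x, y) ≤ g (x, z) + τ

/-- The minimum value `𝔪` of (P). -/
def PVal (X : Set (Rn n)) (Y : Set (Rn m)) (D : Set Q)
    (f : Rn n × Rn m → EReal) (g : Rn n × Rn m → ℝ) (H : Rn n × Rn m → Q)
    (τ : ℝ) : EReal :=
  ⨅ (x : Rn n) (y : Rn m) (_ : PFeas X Y D g H τ x y), f (x, y)

/-- Optimal solution of (P): feasible, finite objective value attaining `𝔪`. -/
def POpt (X : Set (Rn n)) (Y : Set (Rn m)) (D : Set Q)
    (f : Rn n × Rn m → EReal) (g : Rn n × Rn m → ℝ) (H : Rn n × Rn m → Q)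
    (τ : ℝ) (x : Rn n) (y : Rn m) : Prop :=
  PFeas X Y D g H τ x y ∧ f (x, y) ≠ ⊤ ∧ f (x, y) = PVal X Y D f g H τ

/-- Feasibility in the alternative problem (P)^ν with data `Yn, gn, Hn, lamBar, τn`. -/
def PnuFeas (X : Set (Rn n)) (Y : Set (Rn m)) (D : Set Q) (Yn : Set (Rn m))
    (gn : Rn n × Rn m → ℝ) (Hn : Rn n × Rn m → Q) (lamBar τn : ℝ)
    (x : Rn n) (y : Rn m) (u : Q) (α lam : ℝ) : Prop :=
  x ∈ X ∧ y ∈ Y ∧ α ≤ 0 ∧ 0 ≤ lam ∧ lam ≤ lamBar ∧ Hn (x, y) + u ∈ D ∧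
    ∀ z ∈ Yn, gn (x, y) + α ≤ gn (x, z) + lam * infDist (Hn (x, z)) D + τn

/-- Objective function of (P)^ν: `f^ν(x,y) + σ^ν ‖u‖ - θ^ν α`. -/
def PnuObj (fn : Rn n × Rn m → EReal) (σn θn : ℝ)
    (x : Rn n) (y : Rn m) (u : Q) (α : ℝ) : EReal :=
  fn (x, y) + ((σn * ‖u‖ - θn * α : ℝ) : EReal)

/-- The minimum value `𝔪^ν` of (P)^ν. -/
def PnuVal (X : Set (Rn n)) (Y : Set (Rn m)) (D : Set Q) (Yn : Set (Rn m))
    (fn : Rn n × Rn m → EReal) (gn : Rn n × Rn m → ℝ) (Hn : Rn n × Rn m → Q)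
    (σn θn lamBar τn : ℝ) : EReal :=
  ⨅ (x : Rn n) (y : Rn m) (u : Q) (α : ℝ) (lam : ℝ)
    (_ : PnuFeas X Y D Yn gn Hn lamBar τn x y u α lam),
    PnuObj fn σn θn x y u α

/-- `ε`-optimal solution of (P)^ν: feasible with finite objective value at most `𝔪^ν + ε`. -/
def PnuEps (X : Set (Rn n)) (Y : Set (Rn m)) (D : Set Q) (Yn : Set (Rn m))
    (fn : Rn n × Rn m → EReal) (gn : Rn n × Rn m → ℝ) (Hn : Rn n × Rn m → Q)
    (σn θn lamBar τn ε : ℝ)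
    (x : Rn n) (y : Rn m) (u : Q) (α lam : ℝ) : Prop :=
  PnuFeas X Y D Yn gn Hn lamBar τn x y u α lam ∧
    PnuObj fn σn θn x y u α ≠ ⊤ ∧
    PnuObj fn σn θn x y u α ≤ PnuVal X Y D Yn fn gn Hn σn θn lamBar τn + (ε : EReal)

/-- The value function `V(x,u) = inf_{y ∈ Y} { g(x,y) | H(x,y) + u ∈ D }`. -/
def Vfun (Y : Set (Rn m)) (D : Set Q)
    (g : Rn n × Rn m → ℝ) (H : Rn n × Rn m → Q)
    (x : Rn n) (u : Q) : EReal :=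
  ⨅ (y : Rn m) (_ : y ∈ Y ∧ H (x, y) + u ∈ D), (g (x, y) : EReal)

/-- The value function `V` is calm at `x` with penalty threshold `lam`. -/
def CalmAtWith (Y : Set (Rn m)) (D : Set Q)
    (g : Rn n × Rn m → ℝ) (H : Rn n × Rn m → Q)
    (x : Rn n) (lam : ℝ) : Prop :=
  0 ≤ lam ∧ ∀ u : Q,
    Vfun Y D g H x 0 - ((lam * ‖u‖ : ℝ) : EReal) ≤ Vfun Y D g H x u

/-- The value function `V` is calm at `x`. -/
def CalmAt (Y : Set (Rn m)) (D : Set Q)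
    (g : Rn n × Rn m → ℝ) (H : Rn n × Rn m → Q) (x : Rn n) : Prop :=
  ∃ lam : ℝ, CalmAtWith Y D g H x lam

/-- The value function `V` is locally calm at `xbar`. -/
def LocallyCalmAt (Y : Set (Rn m)) (D : Set Q)
    (g : Rn n × Rn m → ℝ) (H : Rn n × Rn m → Q) (xbar : Rn n) : Prop :=
  ∃ lam ρ : ℝ, 0 ≤ lam ∧ 0 < ρ ∧
    ∀ x ∈ Metric.closedBall xbar ρ, ∀ u : Q,
      Vfun Y D g H x 0 - ((lam * ‖u‖ : ℝ) : EReal) ≤ Vfun Y D g H x u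

/-- The penalty-based value function `μ(x,λ) = inf_{y ∈ S} [g(x,y) + λ dist(H(x,y), D)]`. -/
def muSet (S : Set (Rn m)) (D : Set Q)
    (g : Rn n × Rn m → ℝ) (H : Rn n × Rn m → Q)
    (x : Rn n) (lam : ℝ) : EReal :=
  ⨅ (y : Rn m) (_ : y ∈ S), ((g (x, y) + lam * infDist (H (x, y)) D : ℝ) : EReal)

/-- The Basic Assumption (Assumption 2.1). -/
structure BasicAssumption (X : Set (Rn n)) (Y : Set (Rn m)) (D : Set Q)
    (Yν : ℕ → Set (Rn m))
    (f : Rn n × Rn m → EReal) (fν : ℕ → Rn n × Rn m → EReal)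
    (g : Rn n × Rn m → ℝ) (gν : ℕ → Rn n × Rn m → ℝ)
    (H : Rn n × Rn m → Q) (Hν : ℕ → Rn n × Rn m → Q)
    (σ θ lamBar τν δ η : ℕ → ℝ) : Prop where
  X_nonempty : X.Nonempty
  X_closed : IsClosed X
  Y_nonempty : Y.Nonempty
  Y_closed : IsClosed Y
  D_nonempty : D.Nonempty
  D_closed : IsClosed D
  Yν_nonempty : ∀ ν, (Yν ν).Nonempty
  Yν_subset : ∀ ν, Yν ν ⊆ Y
  Yν_conv : ∀ y : Rn m,
    Tendsto (fun ν => infDist y (Yν ν)) atTop (𝓝 (infDist y Y))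
  δ_lim : Tendsto δ atTop (𝓝 0)
  g_err : ∀ ν, ∀ x ∈ X, ∀ y ∈ Y, |gν ν (x, y) - g (x, y)| ≤ δ ν
  g_cont : ContinuousOn g (X ×ˢ Y)
  η_lim : Tendsto η atTop (𝓝 0)
  H_err : ∀ ν, ∀ x ∈ X, ∀ y ∈ Y,
    |infDist (Hν ν (x, y)) D - infDist (H (x, y)) D| ≤ η ν
  H_cont : ContinuousOn H (X ×ˢ Y)
  f_ne_bot : ∀ p, f p ≠ ⊥
  fν_ne_bot : ∀ ν p, fν ν p ≠ ⊥
  f_limsup : ∀ x ∈ X, ∀ y ∈ Y,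
    limsup (fun ν => fν ν (x, y)) atTop ≤ f (x, y)
  f_liminf : ∀ x ∈ X, ∀ y ∈ Y, ∀ (xs : ℕ → Rn n) (ys : ℕ → Rn m),
    (∀ ν, xs ν ∈ X) → (∀ ν, ys ν ∈ Y) →
    Tendsto xs atTop (𝓝 x) → Tendsto ys atTop (𝓝 y) →
    f (x, y) ≤ liminf (fun ν => fν ν (xs ν, ys ν)) atTop
  σ_nonneg : ∀ ν, 0 ≤ σ ν
  θ_nonneg : ∀ ν, 0 ≤ θ ν
  lamBar_nonneg : ∀ ν, 0 ≤ lamBar ν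
  τν_nonneg : ∀ ν, 0 ≤ τν ν
  lamBar_top : Tendsto lamBar atTop atTop
  ση_lim : Tendsto (fun ν => σ ν * η ν) atTop (𝓝 0)
  θlamη_lim : Tendsto (fun ν => θ ν * lamBar ν * η ν) atTop (𝓝 0)
  θδ_lim : Tendsto (fun ν => θ ν * δ ν) atTop (𝓝 0)

/-- The extended real-valued representation `φ^ν` of (P)^ν. -/
def phiNu (X : Set (Rn n)) (Y : Set (Rn m)) (D : Set Q) (Yn : Set (Rn m))
    (fn : Rn n × Rn m → EReal) (gn : Rn n × Rn m → ℝ) (Hn : Rn n × Rn m → Q)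
    (σn θn lamBar τn : ℝ)
    (x : Rn n) (y : Rn m) (u : Q) (α lam : ℝ) : EReal :=
  if x ∈ X ∧ y ∈ Y ∧ α ≤ 0 ∧ 0 ≤ lam ∧ lam ≤ lamBar ∧ Hn (x, y) + u ∈ D ∧
      ((gn (x, y) + α : ℝ) : EReal) ≤ muSet Yn D gn Hn x lam + (τn : EReal)
  then fn (x, y) + ((σn * ‖u‖ - θn * α : ℝ) : EReal) else ⊤

/-- The extended real-valued function `φ_β` representing a restriction of (P). -/
def phiBeta (X : Set (Rn n)) (Y : Set (Rn m)) (D : Set Q)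
    (f : Rn n × Rn m → EReal) (g : Rn n × Rn m → ℝ) (H : Rn n × Rn m → Q)
    (β : ℝ)
    (x : Rn n) (y : Rn m) (u : Q) (α lam : ℝ) : EReal :=
  if x ∈ X ∧ y ∈ Y ∧ u = 0 ∧ α = 0 ∧ 0 ≤ lam ∧ H (x, y) ∈ D ∧
      (g (x, y) : EReal) ≤ muSet Y D g H x lam + (β : EReal)
  then f (x, y) else ⊤

private lemma aux_mul_atTop {σ w : ℕ → ℝ} {W : ℝ} (hW : 0 < W)
    (hσ : Tendsto σ atTop atTop) (hw : Tendsto w atTop (𝓝 W)) :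
    Tendsto (fun ν => σ ν * w ν) atTop atTop := by
  have hev : ∀ᶠ ν in atTop, W / 2 ≤ w ν :=
    hw.eventually (eventually_ge_nhds (by linarith))
  have hσ0 : ∀ᶠ ν in atTop, (0 : ℝ) ≤ σ ν := hσ.eventually_ge_atTop 0
  refine tendsto_atTop_mono' atTop ?_ (hσ.atTop_mul_const (by linarith : (0:ℝ) < W / 2))
  filter_upwards [hev, hσ0] with ν h1 h2
  exact mul_le_mul_of_nonneg_left h1 h2

/-- The feasibility condition appearing in `phiNu`. -/
private abbrev Cnd {n m : ℕ} {Q : Type*} [NormedAddCommGroup Q]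
    (X : Set (Rn n)) (Y : Set (Rn m)) (D : Set Q) (Yn : Set (Rn m))
    (gn : Rn n × Rn m → ℝ) (Hn : Rn n × Rn m → Q) (lamBar τn : ℝ)
    (x : Rn n) (y : Rn m) (u : Q) (α lam : ℝ) : Prop :=
  x ∈ X ∧ y ∈ Y ∧ α ≤ 0 ∧ 0 ≤ lam ∧ lam ≤ lamBar ∧ Hn (x, y) + u ∈ D ∧
    ((gn (x, y) + α : ℝ) : EReal) ≤ muSet Yn D gn Hn x lam + (τn : EReal)

private lemma phiNu_eq_ite {n m : ℕ} {Q : Type*} [NormedAddCommGroup Q]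
    (X : Set (Rn n)) (Y : Set (Rn m)) (D : Set Q) (Yn : Set (Rn m))
    (fn : Rn n × Rn m → EReal) (gn : Rn n × Rn m → ℝ) (Hn : Rn n × Rn m → Q)
    (σn θn lamBar τn : ℝ) (x : Rn n) (y : Rn m) (u : Q) (α lam : ℝ) :
    phiNu X Y D Yn fn gn Hn σn θn lamBar τn x y u α lam =
      if Cnd X Y D Yn gn Hn lamBar τn x y u α lam
      then fn (x, y) + ((σn * ‖u‖ - θn * α : ℝ) : EReal) else ⊤ := rfl

/-- Lemma 5.3 (liminf property): `liminf φ^ν(w^ν) ≥ φ_β(w)` whenever `w^ν → w`. -/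
theorem phiNu_liminf_ge_phiBeta
    [NormedSpace ℝ Q] [FiniteDimensional ℝ Q]
    (X : Set (Rn n)) (Y : Set (Rn m)) (D : Set Q) (Yν : ℕ → Set (Rn m))
    (f : Rn n × Rn m → EReal) (fν : ℕ → Rn n × Rn m → EReal)
    (g : Rn n × Rn m → ℝ) (gν : ℕ → Rn n × Rn m → ℝ)
    (H : Rn n × Rn m → Q) (Hν : ℕ → Rn n × Rn m → Q)
    (σ θ lamBar τν δ η : ℕ → ℝ)
    -- Basic Assumption (a)
    (hXne : X.Nonempty) (hXc : IsClosed X)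
    (hYne : Y.Nonempty) (hYc : IsClosed Y)
    (hDne : D.Nonempty) (hDc : IsClosed D)
    -- Basic Assumption (b)
    (hYνne : ∀ ν, (Yν ν).Nonempty) (hYνY : ∀ ν, Yν ν ⊆ Y)
    (hYνconv : ∀ y : Rn m,
      Tendsto (fun ν => infDist y (Yν ν)) atTop (𝓝 (infDist y Y)))
    -- Basic Assumption (c)
    (hδ : Tendsto δ atTop (𝓝 0))
    (hgerr : ∀ ν, ∀ x ∈ X, ∀ y ∈ Y, |gν ν (x, y) - g (x, y)| ≤ δ ν)
    (hgcont : ContinuousOn g (X ×ˢ Y))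
    -- Basic Assumption (d)
    (hη : Tendsto η atTop (𝓝 0))
    (hHerr : ∀ ν, ∀ x ∈ X, ∀ y ∈ Y,
      |infDist (Hν ν (x, y)) D - infDist (H (x, y)) D| ≤ η ν)
    (hHcont : ContinuousOn H (X ×ˢ Y))
    -- f, f^ν map into (−∞, ∞] and satisfy the liminf condition
    (hf_bot : ∀ p, f p ≠ ⊥) (hfν_bot : ∀ ν p, fν ν p ≠ ⊥)
    (hfliminf : ∀ x ∈ X, ∀ y ∈ Y, ∀ (xs : ℕ → Rn n) (ys : ℕ → Rn m),
      (∀ ν, xs ν ∈ X) → (∀ ν, ys ν ∈ Y) →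
      Tendsto xs atTop (𝓝 x) → Tendsto ys atTop (𝓝 y) →
      f (x, y) ≤ liminf (fun ν => fν ν (xs ν, ys ν)) atTop)
    -- parameters
    (hσ0 : ∀ ν, 0 ≤ σ ν) (hθ0 : ∀ ν, 0 ≤ θ ν)
    (hlamBar0 : ∀ ν, 0 ≤ lamBar ν)
    (β : ℝ) (hτν0 : ∀ ν, 0 ≤ τν ν) (hτνβ : Tendsto τν atTop (𝓝 β))
    (hσ : Tendsto σ atTop atTop) (hθ : Tendsto θ atTop atTop)
    -- the converging sequences
    (xs : ℕ → Rn n) (ys : ℕ → Rn m) (us : ℕ → Q) (αs lams : ℕ → ℝ)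
    (x : Rn n) (y : Rn m) (u : Q) (α lam : ℝ)
    (hcx : Tendsto xs atTop (𝓝 x)) (hcy : Tendsto ys atTop (𝓝 y))
    (hcu : Tendsto us atTop (𝓝 u)) (hcα : Tendsto αs atTop (𝓝 α))
    (hclam : Tendsto lams atTop (𝓝 lam)) :
    phiBeta X Y D f g H β x y u α lam ≤
      liminf (fun ν => phiNu X Y D (Yν ν) (fν ν) (gν ν) (Hν ν)
        (σ ν) (θ ν) (lamBar ν) (τν ν) (xs ν) (ys ν) (us ν) (αs ν) (lams ν)) atTop := by
  rcases eq_top_or_lt_top (liminf (fun ν => phiNu X Y D (Yν ν) (fν ν) (gν ν) (Hν ν)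
      (σ ν) (θ ν) (lamBar ν) (τν ν) (xs ν) (ys ν) (us ν) (αs ν) (lams ν)) atTop) with hLtop | hLlt
  · rw [hLtop]; exact le_top
  obtain ⟨c, hcL, -⟩ := EReal.lt_iff_exists_real_btwn.1 hLlt
  have hfreq : ∃ᶠ ν in atTop, phiNu X Y D (Yν ν) (fν ν) (gν ν) (Hν ν)
      (σ ν) (θ ν) (lamBar ν) (τν ν) (xs ν) (ys ν) (us ν) (αs ν) (lams ν) < (c : EReal) :=
    frequently_lt_of_liminf_lt (by isBoundedDefault) hcL
  obtain ⟨φ, hφmono, hφ⟩ := extraction_of_frequently_atTop hfreq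
  have φat : Tendsto φ atTop atTop := hφmono.tendsto_atTop
  have hcond : ∀ k, Cnd X Y D (Yν (φ k)) (gν (φ k)) (Hν (φ k)) (lamBar (φ k)) (τν (φ k))
      (xs (φ k)) (ys (φ k)) (us (φ k)) (αs (φ k)) (lams (φ k)) := by
    intro k
    by_contra h
    have h2 := hφ k
    rw [phiNu_eq_ite, if_neg h] at h2
    exact absurd h2 not_top_lt
  -- memberships and sign conditions in the limit
  have hxX : x ∈ X := hXc.mem_of_tendsto (hcx.comp φat)
    (Eventually.of_forall fun k => (hcond k).1)
  have hyY : y ∈ Y := hYc.mem_of_tendsto (hcy.comp φat)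
    (Eventually.of_forall fun k => (hcond k).2.1)
  have hα0 : α ≤ 0 := le_of_tendsto (hcα.comp φat)
    (Eventually.of_forall fun k => (hcond k).2.2.1)
  have hlam0 : 0 ≤ lam := ge_of_tendsto (hclam.comp φat)
    (Eventually.of_forall fun k => (hcond k).2.2.2.1)
  -- modified sequences staying in X and Y
  set xs' : ℕ → Rn n := fun ν => if Cnd X Y D (Yν ν) (gν ν) (Hν ν) (lamBar ν) (τν ν)
      (xs ν) (ys ν) (us ν) (αs ν) (lams ν) then xs ν else x with hxs'
  set ys' : ℕ → Rn m := fun ν => if Cnd X Y D (Yν ν) (gν ν) (Hν ν) (lamBar ν) (τν ν)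
      (xs ν) (ys ν) (us ν) (αs ν) (lams ν) then ys ν else y with hys'
  have hx'mem : ∀ ν, xs' ν ∈ X := by
    intro ν; rw [hxs']; dsimp only
    split
    · next h => exact h.1
    · exact hxX
  have hy'mem : ∀ ν, ys' ν ∈ Y := by
    intro ν; rw [hys']; dsimp only
    split
    · next h => exact h.2.1
    · exact hyY
  have hx'tend : Tendsto xs' atTop (𝓝 x) := by
    rw [tendsto_iff_dist_tendsto_zero]
    refine squeeze_zero' (Eventually.of_forall fun ν => dist_nonneg)
      (Eventually.of_forall fun ν => ?_) (tendsto_iff_dist_tendsto_zero.1 hcx)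
    rw [hxs']; dsimp only
    split
    · exact le_rfl
    · simp [dist_nonneg]
  have hy'tend : Tendsto ys' atTop (𝓝 y) := by
    rw [tendsto_iff_dist_tendsto_zero]
    refine squeeze_zero' (Eventually.of_forall fun ν => dist_nonneg)
      (Eventually.of_forall fun ν => ?_) (tendsto_iff_dist_tendsto_zero.1 hcy)
    rw [hys']; dsimp only
    split
    · exact le_rfl
    · simp [dist_nonneg]
  have hF : f (x, y) ≤ liminf (fun ν => fν ν (xs' ν, ys' ν)) atTop :=
    hfliminf x hxX y hyY xs' ys' hx'mem hy'mem hx'tend hy'tend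
  -- a real lower bound on the fν values along the modified sequence
  obtain ⟨b, -, hb⟩ := EReal.lt_iff_exists_real_btwn.1 (bot_lt_iff_ne_bot.2 (hf_bot (x, y)))
  have hev : ∀ᶠ ν in atTop, (b : EReal) < fν ν (xs' ν, ys' ν) :=
    eventually_lt_of_lt_liminf (hb.trans_le hF)
  -- the penalty terms are eventually bounded along the subsequence
  have hs : ∀ᶠ k in atTop, σ (φ k) * ‖us (φ k)‖ - θ (φ k) * αs (φ k) < c - b := by
    filter_upwards [φat.eventually hev] with k hbk
    have hxe : xs' (φ k) = xs (φ k) := by rw [hxs']; exact if_pos (hcond k)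
    have hye : ys' (φ k) = ys (φ k) := by rw [hys']; exact if_pos (hcond k)
    rw [hxe, hye] at hbk
    have h1 : fν (φ k) (xs (φ k), ys (φ k)) +
        ((σ (φ k) * ‖us (φ k)‖ - θ (φ k) * αs (φ k) : ℝ) : EReal) < (c : EReal) := by
      have h2 := hφ k
      rwa [phiNu_eq_ite, if_pos (hcond k)] at h2
    have h3 : ((b + (σ (φ k) * ‖us (φ k)‖ - θ (φ k) * αs (φ k)) : ℝ) : EReal) < (c : EReal) := by
      calc ((b + (σ (φ k) * ‖us (φ k)‖ - θ (φ k) * αs (φ k)) : ℝ) : EReal)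
          = (b : EReal) + ((σ (φ k) * ‖us (φ k)‖ - θ (φ k) * αs (φ k) : ℝ) : EReal) :=
            EReal.coe_add _ _
        _ ≤ fν (φ k) (xs (φ k), ys (φ k)) +
            ((σ (φ k) * ‖us (φ k)‖ - θ (φ k) * αs (φ k) : ℝ) : EReal) :=
            add_le_add_left hbk.le _
        _ < (c : EReal) := h1
    have := EReal.coe_lt_coe_iff.1 h3
    linarith
  -- u = 0
  have hu0 : u = 0 := by
    by_contra h
    have hn : 0 < ‖u‖ := norm_pos_iff.2 h
    have hT : Tendsto (fun ν => σ ν * ‖us ν‖) atTop atTop := aux_mul_atTop hn hσ hcu.norm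
    have hT' : ∀ᶠ k in atTop, c - b < σ (φ k) * ‖us (φ k)‖ :=
      φat.eventually (hT.eventually_gt_atTop (c - b))
    obtain ⟨k, h1, h2⟩ := (hs.and hT').exists
    have h3 : θ (φ k) * αs (φ k) ≤ 0 :=
      mul_nonpos_of_nonneg_of_nonpos (hθ0 (φ k)) (hcond k).2.2.1
    linarith
  -- α = 0
  have hαeq : α = 0 := by
    by_contra h
    have hα' : α < 0 := lt_of_le_of_ne hα0 h
    have hT : Tendsto (fun ν => θ ν * (-αs ν)) atTop atTop :=
      aux_mul_atTop (by linarith : 0 < -α) hθ hcα.neg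
    have hT' : ∀ᶠ k in atTop, c - b < θ (φ k) * (-αs (φ k)) :=
      φat.eventually (hT.eventually_gt_atTop (c - b))
    obtain ⟨k, h1, h2⟩ := (hs.and hT').exists
    have h3 : 0 ≤ σ (φ k) * ‖us (φ k)‖ := mul_nonneg (hσ0 (φ k)) (norm_nonneg _)
    have h4 : θ (φ k) * (-αs (φ k)) = -(θ (φ k) * αs (φ k)) := by ring
    rw [h4] at h2
    linarith
  -- convergence of the pair sequence within X ×ˢ Y
  have hpair : Tendsto (fun k => (xs (φ k), ys (φ k))) atTop (𝓝[X ×ˢ Y] (x, y)) :=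
    tendsto_nhdsWithin_iff.2 ⟨(hcx.comp φat).prodMk_nhds (hcy.comp φat),
      Eventually.of_forall fun k => ⟨(hcond k).1, (hcond k).2.1⟩⟩
  -- H (x, y) ∈ D
  have hHt : Tendsto (fun k => infDist (H (xs (φ k), ys (φ k))) D) atTop
      (𝓝 (infDist (H (x, y)) D)) :=
    ((continuous_infDist_pt D).tendsto _).comp ((hHcont (x, y) ⟨hxX, hyY⟩).tendsto.comp hpair)
  have hbd : ∀ k, infDist (H (xs (φ k), ys (φ k))) D ≤ ‖us (φ k)‖ + η (φ k) := by
    intro k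
    have h1 : infDist (Hν (φ k) (xs (φ k), ys (φ k))) D ≤ ‖us (φ k)‖ := by
      calc infDist (Hν (φ k) (xs (φ k), ys (φ k))) D
          ≤ dist (Hν (φ k) (xs (φ k), ys (φ k)))
              (Hν (φ k) (xs (φ k), ys (φ k)) + us (φ k)) :=
            infDist_le_dist_of_mem (hcond k).2.2.2.2.2.1
        _ = ‖us (φ k)‖ := by rw [dist_eq_norm]; simp
    have h2 := (abs_le.1 (hHerr (φ k) _ (hcond k).1 _ (hcond k).2.1)).1
    linarith
  have hrhs : Tendsto (fun k => ‖us (φ k)‖ + η (φ k)) atTop (𝓝 0) := by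
    have := (hcu.comp φat).norm.add (hη.comp φat)
    simpa [hu0] using this
  have hHD : H (x, y) ∈ D := by
    have h0 : infDist (H (x, y)) D ≤ 0 := le_of_tendsto_of_tendsto' hHt hrhs hbd
    exact (hDc.mem_iff_infDist_zero hDne).2 (le_antisymm h0 infDist_nonneg)
  -- the value function inequality
  have hgle : ∀ z ∈ Y, g (x, y) ≤ g (x, z) + lam * infDist (H (x, z)) D + β := by
    intro z hz
    have hch : ∀ ν : ℕ, ∃ w ∈ Yν ν, dist z w < infDist z (Yν ν) + 1 / (ν + 1) := by
      intro ν
      refine (infDist_lt_iff (hYνne ν)).1 ?_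
      have : (0 : ℝ) < 1 / (ν + 1) := by positivity
      linarith
    choose zs hzsm hzsd using hch
    have hzsY : ∀ ν, zs ν ∈ Y := fun ν => hYνY ν (hzsm ν)
    have hzst : Tendsto zs atTop (𝓝 z) := by
      rw [tendsto_iff_dist_tendsto_zero]
      have hlim : Tendsto (fun ν : ℕ => infDist z (Yν ν) + 1 / (ν + 1 : ℝ)) atTop (𝓝 0) := by
        have h1 := hYνconv z
        rw [infDist_zero_of_mem hz] at h1
        have h2 : Tendsto (fun ν : ℕ => 1 / (ν + 1 : ℝ)) atTop (𝓝 0) :=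
          tendsto_one_div_add_atTop_nhds_zero_nat
        simpa using h1.add h2
      refine squeeze_zero' (Eventually.of_forall fun ν => dist_nonneg)
        (Eventually.of_forall fun ν => ?_) hlim
      rw [dist_comm]
      exact (hzsd ν).le
    have hchain : ∀ k, g (xs (φ k), ys (φ k)) + αs (φ k) ≤
        g (xs (φ k), zs (φ k)) + lams (φ k) * infDist (H (xs (φ k), zs (φ k))) D
          + lams (φ k) * η (φ k) + 2 * δ (φ k) + τν (φ k) := by
      intro k
      obtain ⟨hx1, hy1, -, hlamk, -, -, hmuk⟩ := hcond k
      have hmule : muSet (Yν (φ k)) D (gν (φ k)) (Hν (φ k)) (xs (φ k)) (lams (φ k)) ≤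
          ((gν (φ k) (xs (φ k), zs (φ k)) +
            lams (φ k) * infDist (Hν (φ k) (xs (φ k), zs (φ k))) D : ℝ) : EReal) :=
        iInf₂_le (zs (φ k)) (hzsm (φ k))
      have hA : ((gν (φ k) (xs (φ k), ys (φ k)) + αs (φ k) : ℝ) : EReal) ≤
          ((gν (φ k) (xs (φ k), zs (φ k)) +
            lams (φ k) * infDist (Hν (φ k) (xs (φ k), zs (φ k))) D + τν (φ k) : ℝ) : EReal) := by
        refine hmuk.trans ?_
        calc muSet (Yν (φ k)) D (gν (φ k)) (Hν (φ k)) (xs (φ k)) (lams (φ k)) +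
              ((τν (φ k) : ℝ) : EReal)
            ≤ ((gν (φ k) (xs (φ k), zs (φ k)) +
                lams (φ k) * infDist (Hν (φ k) (xs (φ k), zs (φ k))) D : ℝ) : EReal) +
              ((τν (φ k) : ℝ) : EReal) := add_le_add_left hmule _
          _ = ((gν (φ k) (xs (φ k), zs (φ k)) +
                lams (φ k) * infDist (Hν (φ k) (xs (φ k), zs (φ k))) D + τν (φ k) : ℝ) : EReal) :=
              (EReal.coe_add _ _).symm
      have hA' : gν (φ k) (xs (φ k), ys (φ k)) + αs (φ k) ≤
          gν (φ k) (xs (φ k), zs (φ k)) +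
            lams (φ k) * infDist (Hν (φ k) (xs (φ k), zs (φ k))) D + τν (φ k) := by
        exact_mod_cast hA
      have hg1 := (abs_le.1 (hgerr (φ k) _ hx1 _ hy1)).1
      have hg2 := (abs_le.1 (hgerr (φ k) _ hx1 _ (hzsY (φ k)))).2
      have hH2 := (abs_le.1 (hHerr (φ k) _ hx1 _ (hzsY (φ k)))).2
      have hmul : lams (φ k) * infDist (Hν (φ k) (xs (φ k), zs (φ k))) D ≤
          lams (φ k) * (infDist (H (xs (φ k), zs (φ k))) D + η (φ k)) :=
        mul_le_mul_of_nonneg_left (by linarith) hlamk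
      rw [mul_add] at hmul
      linarith
    have hL1 : Tendsto (fun k => g (xs (φ k), ys (φ k)) + αs (φ k)) atTop (𝓝 (g (x, y))) := by
      have hgt : Tendsto (fun k => g (xs (φ k), ys (φ k))) atTop (𝓝 (g (x, y))) :=
        (hgcont (x, y) ⟨hxX, hyY⟩).tendsto.comp hpair
      have := hgt.add (hcα.comp φat)
      simpa [hαeq] using this
    have hpair2 : Tendsto (fun k => (xs (φ k), zs (φ k))) atTop (𝓝[X ×ˢ Y] (x, z)) :=
      tendsto_nhdsWithin_iff.2 ⟨(hcx.comp φat).prodMk_nhds (hzst.comp φat),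
        Eventually.of_forall fun k => ⟨(hcond k).1, hzsY (φ k)⟩⟩
    have hgt2 : Tendsto (fun k => g (xs (φ k), zs (φ k))) atTop (𝓝 (g (x, z))) :=
      (hgcont (x, z) ⟨hxX, hz⟩).tendsto.comp hpair2
    have hHt2 : Tendsto (fun k => infDist (H (xs (φ k), zs (φ k))) D) atTop
        (𝓝 (infDist (H (x, z)) D)) :=
      ((continuous_infDist_pt D).tendsto _).comp ((hHcont (x, z) ⟨hxX, hz⟩).tendsto.comp hpair2)
    have hL2 : Tendsto (fun k => g (xs (φ k), zs (φ k)) +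
        lams (φ k) * infDist (H (xs (φ k), zs (φ k))) D
          + lams (φ k) * η (φ k) + 2 * δ (φ k) + τν (φ k)) atTop
        (𝓝 (g (x, z) + lam * infDist (H (x, z)) D + lam * 0 + 2 * 0 + β)) :=
      ((((hgt2.add ((hclam.comp φat).mul hHt2)).add
        ((hclam.comp φat).mul (hη.comp φat))).add
        (tendsto_const_nhds.mul (hδ.comp φat))).add (hτνβ.comp φat))
    have hfin := le_of_tendsto_of_tendsto' hL1 hL2 hchain
    linarith
  have hmu : (g (x, y) : EReal) ≤ muSet Y D g H x lam + (β : EReal) := by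
    have h1 : ((g (x, y) - β : ℝ) : EReal) ≤ muSet Y D g H x lam := by
      refine le_iInf₂ fun z hz => ?_
      exact_mod_cast (by linarith [hgle z hz] :
        g (x, y) - β ≤ g (x, z) + lam * infDist (H (x, z)) D)
    calc (g (x, y) : EReal) = ((g (x, y) - β : ℝ) : EReal) + (β : EReal) := by
          rw [← EReal.coe_add]; norm_num
      _ ≤ muSet Y D g H x lam + (β : EReal) := add_le_add_left h1 _
  -- conclusion
  have hval : phiBeta X Y D f g H β x y u α lam = f (x, y) := by
    unfold phiBeta
    rw [if_pos ⟨hxX, hyY, hu0, hαeq, hlam0, hHD, hmu⟩]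
  rw [hval]
  have hpt : ∀ ν, fν ν (xs' ν, ys' ν) ≤ phiNu X Y D (Yν ν) (fν ν) (gν ν) (Hν ν)
      (σ ν) (θ ν) (lamBar ν) (τν ν) (xs ν) (ys ν) (us ν) (αs ν) (lams ν) := by
    intro ν
    rw [phiNu_eq_ite]
    by_cases h : Cnd X Y D (Yν ν) (gν ν) (Hν ν) (lamBar ν) (τν ν)
      (xs ν) (ys ν) (us ν) (αs ν) (lams ν)
    · rw [if_pos h]
      have hxe : xs' ν = xs ν := by rw [hxs']; exact if_pos h
      have hye : ys' ν = ys ν := by rw [hys']; exact if_pos h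
      rw [hxe, hye]
      have h0 : (0 : ℝ) ≤ σ ν * ‖us ν‖ - θ ν * αs ν := by
        have h1 : 0 ≤ σ ν * ‖us ν‖ := mul_nonneg (hσ0 ν) (norm_nonneg _)
        have h2 : θ ν * αs ν ≤ 0 := mul_nonpos_of_nonneg_of_nonpos (hθ0 ν) h.2.2.1
        linarith
      nth_rewrite 1 [← add_zero (fν ν (xs ν, ys ν))]
      exact add_le_add_right (by exact_mod_cast h0) _
    · rw [if_neg h]; exact le_top
  calc f (x, y) ≤ liminf (fun ν => fν ν (xs' ν, ys' ν)) atTop := hF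
    _ ≤ liminf (fun ν => phiNu X Y D (Yν ν) (fν ν) (gν ν) (Hν ν)
        (σ ν) (θ ν) (lamBar ν) (τν ν) (xs ν) (ys ν) (us ν) (αs ν) (lams ν)) atTop :=
      liminf_le_liminf (Eventually.of_forall hpt)
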